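/- arXiv:2107.03040 — 2 statements merged into one kernel-verified Lean document; each statement's English description precedes it below -/
import Mathlib

section
/- On series-parallel graphs, in any Nash equilibrium s of a capacitated symmetric cost-sharing connection game with generalized cost-sharing functions, the payment of every agent is at most the optimal sum-cost: p_j(s) ≤ cost_sc(s*) for all agents j, where s* is a sum-cost-optimal feasible profile. (Assume the path-insertion property: for any feasible profile s_{−i} of n−1 agents, there exists an s-t path s' using only edges of E(s*) such that (s_{−i}, s') is feasible.) -/
open Finset

namespace Stmt11

variable {α : Type*} [DecidableEq α]

/-- Number of agents using edge `e` under profile `s` (paths as edge sets). -/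
def users {n : ℕ} (s : Fin n → Finset α) (e : α) : ℕ :=
  (univ.filter (fun j => e ∈ s j)).card

/-- Payment of agent `j`: the sum over the edges of its path of the shared
cost `f_e(x_e(s))`. -/
def pay {n : ℕ} (f : α → ℕ → ℝ) (s : Fin n → Finset α) (j : Fin n) : ℝ :=
  ∑ e ∈ s j, f e (users s e)

/-- Sum-cost of a profile. -/
def sumCost {n : ℕ} (f : α → ℕ → ℝ) (s : Fin n → Finset α) : ℝ :=
  ∑ j, pay f s j

/-- A profile is feasible if no edge capacity is exceeded. -/
def Feasible {n : ℕ} (c : α → ℕ) (s : Fin n → Finset α) : Prop :=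
  ∀ e, users s e ≤ c e

end Stmt11

open Stmt11 in
/-- Per-agent bound on SP graphs: in any Nash equilibrium `s` of a capacitated
symmetric cost-sharing connection game with generalized cost-sharing
functions, assuming the path-insertion property for a sum-cost optimal
feasible profile `sstar`, the payment of every agent is at most the optimal
sum-cost `cost_sc(sstar)`. -/
theorem stmt_11 {α : Type*} [DecidableEq α] (n : ℕ)
    (Paths : Finset (Finset α))            -- the s-t paths of the SP graph
    (p : α → ℝ) (c : α → ℕ) (f : α → ℕ → ℝ)
    (hp : ∀ e, 0 ≤ p e)
    (hmono : ∀ e, ∀ a b : ℕ, 1 ≤ a → a ≤ b → f e b ≤ f e a)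
    (hlb : ∀ e, ∀ k : ℕ, 1 ≤ k → p e / (k : ℝ) ≤ f e k)
    (hone : ∀ e, f e 1 = p e)
    (s sstar : Fin n → Finset α)
    (hvalid : ∀ j, s j ∈ Paths) (hvalidstar : ∀ j, sstar j ∈ Paths)
    (hfeas : Feasible c s) (hfeasstar : Feasible c sstar)
    -- `s` is a Nash equilibrium
    (hNE : ∀ (j : Fin n), ∀ P ∈ Paths, Feasible c (Function.update s j P) →
      pay f s j ≤ pay f (Function.update s j P) j)
    -- path-insertion property (flow lemma on SP graphs), for `sstar`
    (hinsert : ∀ i : Fin n, ∃ P ∈ Paths,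
      P ⊆ univ.biUnion sstar ∧ Feasible c (Function.update s i P)) :
    ∀ j : Fin n, pay f s j ≤ sumCost f sstar := by

  intro j
  obtain ⟨P, hP, hPsub, hPfeas⟩ := hinsert j
  have h1 : pay f s j ≤ pay f (Function.update s j P) j := hNE j P hP hPfeas
  set t := Function.update s j P with ht
  have htj : t j = P := Function.update_self j P s
  have h2 : pay f t j ≤ ∑ e ∈ P, p e := by
    rw [pay, htj]
    apply Finset.sum_le_sum
    intro e he
    have h1e : 1 ≤ users t e := by
      refine Finset.card_pos.mpr ⟨j, ?_⟩
      simp [users, htj, he]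
    calc f e (users t e) ≤ f e 1 := hmono e 1 _ le_rfl h1e
      _ = p e := hone e
  have h3 : ∑ e ∈ P, p e ≤ ∑ e ∈ univ.biUnion sstar, p e :=
    Finset.sum_le_sum_of_subset_of_nonneg hPsub (fun e _ _ => hp e)
  have h4 : ∑ e ∈ univ.biUnion sstar, p e ≤ sumCost f sstar := by
    rw [sumCost]
    have hswap : ∑ k, pay f sstar k
        = ∑ e ∈ univ.biUnion sstar, (users sstar e : ℝ) * f e (users sstar e) := by
      simp only [pay]
      have step : ∀ k : Fin n, ∑ e ∈ sstar k, f e (users sstar e)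
          = ∑ e ∈ univ.biUnion sstar,
              if e ∈ sstar k then f e (users sstar e) else 0 := by
        intro k
        rw [Finset.sum_ite_mem, Finset.inter_eq_right.mpr
          (fun e he => Finset.mem_biUnion.mpr ⟨k, Finset.mem_univ k, he⟩)]
      simp only [step]
      rw [Finset.sum_comm]
      refine Finset.sum_congr rfl fun e _ => ?_
      rw [← Finset.sum_filter, Finset.sum_const, users, nsmul_eq_mul]
    rw [hswap]
    apply Finset.sum_le_sum
    intro e he
    obtain ⟨k, _, hk⟩ := Finset.mem_biUnion.mp he
    have hu : 1 ≤ users sstar e := by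
      refine Finset.card_pos.mpr ⟨k, ?_⟩
      simp [users, hk]
    have hupos : (0:ℝ) < (users sstar e : ℝ) := by exact_mod_cast hu
    have := hlb e (users sstar e) hu
    calc p e = (users sstar e : ℝ) * (p e / (users sstar e : ℝ)) := by
          field_simp
      _ ≤ (users sstar e : ℝ) * f e (users sstar e) := by
          exact mul_le_mul_of_nonneg_left this hupos.le
  linarith
end

section
/- Price of stability under max-cost for asymmetric games is at most n²: in a capacitated asymmetric cost-sharing connection game with n agents and generalized cost-sharing functions, any Nash equilibrium s reached from a max-cost optimal profile s* by cost-decreasing deviations satisfies cost_mc(s) ≤ n² · cost_mc(s*). -/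
open Finset

namespace Stmt16

variable {α : Type*} [DecidableEq α]

/-- Number of agents using edge `e` under profile `s` (agent `j`'s path is
the edge set `s j`). -/
def users {n : ℕ} (s : Fin n → Finset α) (e : α) : ℕ :=
  (univ.filter (fun j => e ∈ s j)).card

/-- Payment of agent `j`. -/
def pay {n : ℕ} (f : α → ℕ → ℝ) (s : Fin n → Finset α) (j : Fin n) : ℝ :=
  ∑ e ∈ s j, f e (users s e)

/-- Rosenthal's potential of a profile, over the finite edge set `E`. -/
def potential {n : ℕ} (E : Finset α) (f : α → ℕ → ℝ) (s : Fin n → Finset α) : ℝ :=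
  ∑ e ∈ E, ∑ k ∈ Finset.Icc 1 (users s e), f e k

end Stmt16

open Stmt16 in
/-- Max-cost PoS at most `n²` for capacitated *asymmetric* cost-sharing
connection games with generalized cost-sharing functions: if `s` is a Nash
equilibrium reached from a max-cost optimal profile `sstar` by cost-decreasing
deviations (so `Φ(s) ≤ Φ(sstar)`), then
`cost_mc(s) ≤ n² · cost_mc(sstar)`. -/
theorem stmt_16 {α : Type*} [DecidableEq α] (E : Finset α) (n : ℕ) (hn : 1 ≤ n)
    (p : α → ℝ) (f : α → ℕ → ℝ)
    (hp : ∀ e ∈ E, 0 ≤ p e)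
    (hmono : ∀ e ∈ E, ∀ a b : ℕ, 1 ≤ a → a ≤ b → f e b ≤ f e a)
    (hlb : ∀ e ∈ E, ∀ k : ℕ, 1 ≤ k → p e / (k : ℝ) ≤ f e k)
    (hone : ∀ e ∈ E, f e 1 = p e)
    (s sstar : Fin n → Finset α)
    (hsE : ∀ j, s j ⊆ E) (hsstarE : ∀ j, sstar j ⊆ E)
    -- the potential weakly decreases along the cost-decreasing deviations
    (hΦ : potential E f s ≤ potential E f sstar) :
    Finset.univ.sup' (Finset.univ_nonempty_iff.mpr ⟨⟨0, hn⟩⟩) (pay f s)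
      ≤ (n : ℝ) ^ 2 *
        Finset.univ.sup' (Finset.univ_nonempty_iff.mpr ⟨⟨0, hn⟩⟩) (pay f sstar) := by
  have hf0 : ∀ e ∈ E, ∀ k : ℕ, 1 ≤ k → 0 ≤ f e k := by
    intro e he k hk
    have h1 : (0:ℝ) ≤ p e / k := div_nonneg (hp e he) (by positivity)
    linarith [hlb e he k hk]
  have hA : Finset.univ.sup' (Finset.univ_nonempty_iff.mpr ⟨⟨0, hn⟩⟩) (pay f s)
      ≤ potential E f s := by
    apply Finset.sup'_le
    intro j _
    unfold pay potential
    calc ∑ e ∈ s j, f e (users s e)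
        ≤ ∑ e ∈ s j, ∑ k ∈ Finset.Icc 1 (users s e), f e k := by
          apply Finset.sum_le_sum
          intro e he
          have heE := hsE j he
          have hx : 1 ≤ users s e :=
            Finset.card_pos.mpr ⟨j, by simp [users, he]⟩
          exact Finset.single_le_sum
            (fun k hk => hf0 e heE k (Finset.mem_Icc.mp hk).1)
            (Finset.mem_Icc.mpr ⟨hx, le_rfl⟩)
      _ ≤ ∑ e ∈ E, ∑ k ∈ Finset.Icc 1 (users s e), f e k := by
          apply Finset.sum_le_sum_of_subset_of_nonneg (hsE j)
          intro e heE _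
          exact Finset.sum_nonneg fun k hk => hf0 e heE k (Finset.mem_Icc.mp hk).1
  have hB : potential E f sstar ≤ ∑ j : Fin n, ∑ e ∈ sstar j, (n:ℝ) * f e (users sstar e) := by
    unfold potential
    calc ∑ e ∈ E, ∑ k ∈ Finset.Icc 1 (users sstar e), f e k
        ≤ ∑ e ∈ E, (users sstar e : ℝ) * p e := by
          apply Finset.sum_le_sum
          intro e he
          calc ∑ k ∈ Finset.Icc 1 (users sstar e), f e k
              ≤ ∑ k ∈ Finset.Icc 1 (users sstar e), p e := by
                apply Finset.sum_le_sum
                intro k hk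
                have hk1 := (Finset.mem_Icc.mp hk).1
                have h := hmono e he 1 k le_rfl hk1
                rw [hone e he] at h; exact h
            _ = (users sstar e : ℝ) * p e := by
                rw [Finset.sum_const, Nat.card_Icc]
                simp [nsmul_eq_mul]
      _ = ∑ j : Fin n, ∑ e ∈ sstar j, p e := by
          have h1 : ∀ e ∈ E, (users sstar e : ℝ) * p e
              = ∑ j : Fin n, if e ∈ sstar j then p e else 0 := by
            intro e _
            rw [Finset.sum_ite, Finset.sum_const, Finset.sum_const]
            simp [users, nsmul_eq_mul]
          rw [Finset.sum_congr rfl h1, Finset.sum_comm]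
          apply Finset.sum_congr rfl
          intro j _
          rw [Finset.sum_ite_mem, Finset.inter_eq_right.mpr (hsstarE j)]
      _ ≤ ∑ j : Fin n, ∑ e ∈ sstar j, (n:ℝ) * f e (users sstar e) := by
          apply Finset.sum_le_sum; intro j _
          apply Finset.sum_le_sum; intro e he
          have heE := hsstarE j he
          have hx : 1 ≤ users sstar e :=
            Finset.card_pos.mpr ⟨j, by simp [users, he]⟩
          have hxn : users sstar e ≤ n := by
            have := Finset.card_filter_le (Finset.univ : Finset (Fin n)) (fun j => e ∈ sstar j)
            simpa [users] using this
          have h1 := hlb e heE (users sstar e) hx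
          have hxpos : (0:ℝ) < users sstar e := by exact_mod_cast hx
          have hpe : p e ≤ (users sstar e : ℝ) * f e (users sstar e) := by
            have := (div_le_iff₀ hxpos).mp h1
            linarith [this]
          calc p e ≤ (users sstar e : ℝ) * f e (users sstar e) := hpe
            _ ≤ (n:ℝ) * f e (users sstar e) := by
              apply mul_le_mul_of_nonneg_right _ (hf0 e heE _ hx)
              exact_mod_cast hxn
  have hD : ∑ j : Fin n, ∑ e ∈ sstar j, (n:ℝ) * f e (users sstar e)
      ≤ (n:ℝ)^2 * Finset.univ.sup' (Finset.univ_nonempty_iff.mpr ⟨⟨0, hn⟩⟩) (pay f sstar) := by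
    calc ∑ j : Fin n, ∑ e ∈ sstar j, (n:ℝ) * f e (users sstar e)
        ≤ ∑ _j : Fin n, (n:ℝ) *
            Finset.univ.sup' (Finset.univ_nonempty_iff.mpr ⟨⟨0, hn⟩⟩) (pay f sstar) := by
          apply Finset.sum_le_sum; intro j _
          rw [← Finset.mul_sum]
          exact mul_le_mul_of_nonneg_left
            (Finset.le_sup' (pay f sstar) (Finset.mem_univ j)) (by positivity)
      _ = (n:ℝ)^2 * Finset.univ.sup' (Finset.univ_nonempty_iff.mpr ⟨⟨0, hn⟩⟩) (pay f sstar) := by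
          rw [Finset.sum_const, Finset.card_univ, Fintype.card_fin, nsmul_eq_mul]
          ring
  linarith
end
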